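/- Let γ₀ > 0, λ₀, λ₁ > 0, α = λ₀/γ₀, ρ ∈ ℝ, C > 0, and define π₀(x) = C(x-ρ)^{α-1}e^{-λ₁(x-ρ)}, π₁(x) = γ₀C(x-ρ)^{α}e^{-λ₁(x-ρ)} for x > ρ. Then on (ρ, ∞): (x-ρ)γ₀π₀'(x) = (λ₀-γ₀)π₀(x) - λ₁π₁(x) and -π₁'(x) = -λ₀π₀(x) + λ₁π₁(x). -/

import Mathlib

lemma kac_aux (ρ C β l1 : ℝ) (g : ℝ → ℝ)
    (hg : ∀ x, g x = C * (x - ρ) ^ β * Real.exp (-l1 * (x - ρ)))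
    (x : ℝ) (hx : ρ < x) :
    HasDerivAt g (C * (β * (x - ρ) ^ (β - 1)) * Real.exp (-l1 * (x - ρ))
      + C * (x - ρ) ^ β * (Real.exp (-l1 * (x - ρ)) * (-l1))) x := by
  have hx0 : x - ρ ≠ 0 := by linarith [hx]
  have hsub : HasDerivAt (fun y : ℝ => y - ρ) 1 x := (hasDerivAt_id x).sub_const ρ
  have h1 : HasDerivAt (fun y : ℝ => (y - ρ) ^ β) (β * (x - ρ) ^ (β - 1) * 1) x :=
    by exact (Real.hasDerivAt_rpow_const (p := β) (Or.inl hx0)).comp x hsub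
  have h2 : HasDerivAt (fun y : ℝ => -l1 * (y - ρ)) (-l1 * 1) x := hsub.const_mul (-l1)
  have h3 : HasDerivAt (fun y : ℝ => Real.exp (-l1 * (y - ρ)))
      (Real.exp (-l1 * (x - ρ)) * (-l1 * 1)) x := (Real.hasDerivAt_exp _).comp x h2
  have h4 : HasDerivAt (fun y => C * (y - ρ) ^ β * Real.exp (-l1 * (y - ρ)))
      (C * (β * (x - ρ) ^ (β - 1) * 1) * Real.exp (-l1 * (x - ρ))
        + C * (x - ρ) ^ β * (Real.exp (-l1 * (x - ρ)) * (-l1 * 1))) x :=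
    ((h1.const_mul C).mul h3)
  have : g = fun y => C * (y - ρ) ^ β * Real.exp (-l1 * (y - ρ)) := funext hg
  rw [this]
  convert h4 using 1
  ring

theorem kac_ou_nonstrict_stationary_system (γ0 l0 l1 ρ C : ℝ)
    (hγ0 : 0 < γ0) (hl0 : 0 < l0) (hl1 : 0 < l1) (hC : 0 < C)
    (α : ℝ) (hα : α = l0 / γ0)
    (π0 π1 : ℝ → ℝ)
    (hπ0 : ∀ x, π0 x = C * (x - ρ) ^ (α - 1) * Real.exp (-l1 * (x - ρ)))
    (hπ1 : ∀ x, π1 x = γ0 * C * (x - ρ) ^ α * Real.exp (-l1 * (x - ρ))) :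
    ∀ x ∈ Set.Ioi ρ,
      (x - ρ) * γ0 * deriv π0 x = (l0 - γ0) * π0 x - l1 * π1 x ∧
      -deriv π1 x = -l0 * π0 x + l1 * π1 x := by
  intro x hx
  simp only [Set.mem_Ioi] at hx
  have hx0 : x - ρ ≠ 0 := by linarith
  have d0 := (kac_aux ρ C (α - 1) l1 π0 hπ0 x hx).deriv
  have d1 := (kac_aux ρ (γ0 * C) α l1 π1 hπ1 x hx).deriv
  have e1 : (x - ρ) ^ (α - 1) = (x - ρ) ^ (α - 1 - 1) * (x - ρ) := by
    rw [← Real.rpow_add_one hx0]; ring_nf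
  have e2 : (x - ρ) ^ α = (x - ρ) ^ (α - 1) * (x - ρ) := by
    rw [← Real.rpow_add_one hx0]; ring_nf
  have hγα : γ0 * α = l0 := by rw [hα]; field_simp
  constructor
  · rw [d0, hπ0 x, hπ1 x, e2]
    linear_combination (-(γ0 * C * (α - 1) * Real.exp (-l1 * (x - ρ)))) * e1
      + (C * Real.exp (-l1 * (x - ρ)) * (x - ρ) ^ (α - 1)) * hγα
  · rw [d1, hπ0 x, hπ1 x, e2]
    linear_combination (-(C * (x - ρ) ^ (α - 1) * Real.exp (-l1 * (x - ρ)))) * hγα
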